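/- Let C, D, E be categories, let P : C ⥤ E and Q : D ⥤ E be functors, let e be an object of E, and suppose given an adjunction L ⊣ R with L : C ⥤ D and R : D ⥤ C together with a natural isomorphism ε : Q ≅ R ⋙ P (componentwise, ε_d : Q(d) ≅ P(R(d))). Then there is an induced adjunction L' ⊣ R' between the structured arrow categories StructuredArrow e P and StructuredArrow e Q, where R' sends an object (d, λ : e ⟶ Q(d)) to (R(d), ε_d ∘ λ : e ⟶ P(R(d))), and L' sends an object (c, λ : e ⟶ P(c)) to (L(c), ε⁻¹_{L(c)} ∘ P(η_c) ∘ λ : e ⟶ Q(L(c))), with η the unit of the adjunction L ⊣ R. -/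
import Mathlib


open CategoryTheory

/-- Given functors `P : C ⥤ E`, `Q : D ⥤ E`, an object `e : E`, an adjunction `L ⊣ R`
and a natural isomorphism `ε : Q ≅ R ⋙ P`, there is an induced adjunction `L' ⊣ R'`
between the structured arrow categories, with `R'` sending `(d, fun)` to
`(R d, ε_d ∘ fun)` and `L'` sending `(c, fun)` to `(L c, ε⁻¹_{L c} ∘ P (η_c) ∘ fun)`. -/
theorem stmt_0 {C D E : Type*} [Category C] [Category D] [Category E]
    (P : C ⥤ E) (Q : D ⥤ E) (e : E)
    (L : C ⥤ D) (R : D ⥤ C) (adj : L ⊣ R) (ε : Q ≅ R ⋙ P) :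
    ∃ (L' : StructuredArrow e P ⥤ StructuredArrow e Q)
      (R' : StructuredArrow e Q ⥤ StructuredArrow e P),
      Nonempty (L' ⊣ R') ∧
      (∀ X : StructuredArrow e P,
        L'.obj X =
          StructuredArrow.mk
            (X.hom ≫ P.map (adj.unit.app X.right) ≫ ε.inv.app (L.obj X.right))) ∧
      (∀ Y : StructuredArrow e Q,
        R'.obj Y = StructuredArrow.mk
          ((Y.hom ≫ ε.hom.app Y.right : e ⟶ P.obj (R.obj Y.right)))) := by
  refine ⟨{
      obj := fun X => StructuredArrow.mk
        (X.hom ≫ P.map (adj.unit.app X.right) ≫ ε.inv.app (L.obj X.right))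
      map := fun {X₁ X₂} f => StructuredArrow.homMk (L.map f.right) ?_
      map_id := fun X => by ext; simp
      map_comp := fun f g => by ext; simp },
    { obj := fun Y => StructuredArrow.mk
        ((Y.hom ≫ ε.hom.app Y.right : e ⟶ P.obj (R.obj Y.right)))
      map := fun {Y₁ Y₂} g => StructuredArrow.homMk (R.map g.right) ?_
      map_id := fun Y => by ext; simp
      map_comp := fun f g => by ext; simp },
    ⟨Adjunction.mkOfHomEquiv
      { homEquiv := fun X Y =>
          { toFun := fun g => StructuredArrow.homMk ((adj.homEquiv _ _) g.right) ?_
            invFun := fun g => StructuredArrow.homMk ((adj.homEquiv _ _).symm g.right) ?_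
            left_inv := fun g => by ext; simp
            right_inv := fun g => by ext; simp }
        homEquiv_naturality_left_symm := fun f g => by
          ext; exact adj.homEquiv_naturality_left_symm f.right g.right
        homEquiv_naturality_right := fun f g => by
          ext; exact adj.homEquiv_naturality_right f.right g.right }⟩,
    fun X => rfl, fun Y => rfl⟩
  -- w for L'.map
  · have h := ε.inv.naturality (L.map f.right)
    have hu := adj.unit.naturality f.right
    simp only [Functor.comp_map] at h
    simp only [Functor.id_map, Functor.comp_map] at hu
    simp only [StructuredArrow.mk_hom_eq_self, Functor.const_obj_obj, Category.assoc]
    rw [← h, ← Functor.map_comp_assoc, ← hu, Functor.map_comp_assoc,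
      StructuredArrow.w_assoc f]
  -- w for R'.map
  · have h := ε.hom.naturality g.right
    simp only [Functor.comp_map] at h
    simp only [StructuredArrow.mk_hom_eq_self, Functor.const_obj_obj, Category.assoc]
    rw [← h, StructuredArrow.w_assoc g]
  -- w for toFun
  · have hw := StructuredArrow.w g
    have h := ε.hom.naturality g.right
    simp only [Functor.comp_map] at h
    simp only [StructuredArrow.mk_hom_eq_self, Functor.const_obj_obj, Category.assoc] at hw ⊢
    rw [Adjunction.homEquiv_unit, Functor.map_comp, ← hw]
    simp [h]
  -- w for invFun
  · have hw := StructuredArrow.w g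
    have h := ε.hom.naturality ((adj.homEquiv _ _).symm g.right)
    simp only [Functor.comp_map] at h
    simp only [StructuredArrow.mk_hom_eq_self, Functor.const_obj_obj, Category.assoc] at hw ⊢
    rw [← cancel_mono (ε.hom.app Y.right), Category.assoc, Category.assoc, Category.assoc, h,
      Iso.inv_hom_id_app_assoc, ← Functor.map_comp, ← Adjunction.homEquiv_unit,
      Equiv.apply_symm_apply, hw]
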